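/- Let n = sm with m odd, g(x) = x^{2^k+1} on F_{2^n} with gcd(n,k) = t, F_{2^t} ⊆ F_{2^s}, and n/t odd. Fix α ∈ F_{2^s} nonzero and define G(x) = x^{2^k+1} + α if x ∈ F_{2^s}, and G(x) = x^{2^k+1} otherwise. Then for every c ∈ F_{2^t} \ {1}, the c-differential uniformity of G over F_{2^n} is at most 3. -/
import Mathlib

private lemma pow_pow_two {F : Type*} [Monoid F] (x : F) (a b : ℕ) :
    (x ^ 2 ^ a) ^ 2 ^ b = x ^ 2 ^ (a + b) := by
  rw [← pow_mul, ← pow_add]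

private lemma fix_mul {F : Type*} [Monoid F] (x : F) (t : ℕ) (h : x ^ 2 ^ t = x) (j : ℕ) :
    x ^ 2 ^ (t * j) = x := by
  induction j with
  | zero => simp
  | succ j ih => rw [mul_add, mul_one, ← pow_pow_two, ih, h]

private lemma fix_dvd {F : Type*} [Monoid F] (x : F) {t k : ℕ} (h : x ^ 2 ^ t = x)
    (hd : t ∣ k) : x ^ 2 ^ k = x := by
  obtain ⟨j, rfl⟩ := hd
  exact fix_mul x t h j

private lemma powtwo_inj {F : Type*} [Field F] [CharP F 2] (j : ℕ) :
    Function.Injective fun x : F => x ^ 2 ^ j := by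
  intro x y h
  simp only at h
  have h2 : (frobenius F 2)^[j] x = (frobenius F 2)^[j] y := by
    rw [iterate_frobenius, iterate_frobenius, h]
  exact ((frobenius F 2).injective.iterate j) h2

private lemma fix_gcd {F : Type*} [Field F] [CharP F 2] (x : F) (a b : ℕ) :
    x ^ 2 ^ a = x → x ^ 2 ^ b = x → x ^ 2 ^ (Nat.gcd a b) = x := by
  induction a, b using Nat.gcd.induction with
  | H0 b => intro _ hb; simpa using hb
  | H1 a b ha ih =>
    intro hA hB
    rw [Nat.gcd_rec]
    refine ih ?_ hA
    have h1 : x ^ 2 ^ (a * (b / a)) = x := fix_mul x a hA _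
    refine powtwo_inj (a * (b / a)) ?_
    simp only
    rw [pow_pow_two, Nat.mod_add_div, hB, h1]

private lemma gold_inj {F : Type*} [Field F] [CharP F 2] {n k t : ℕ} (hk1 : 1 ≤ k)
    (ht : t = Nat.gcd n k) (hnt : Odd (n / t))
    (hq : ∀ x : F, x ^ 2 ^ n = x) :
    Function.Injective fun y : F => y ^ (2 ^ k + 1) := by
  have ht0 : 0 < t := ht ▸ Nat.gcd_pos_of_pos_right n hk1
  have htk : t ∣ k := ht ▸ Nat.gcd_dvd_right n k
  have htn : t ∣ n := ht ▸ Nat.gcd_dvd_left n k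
  have hg2 : Nat.gcd (2 * k) n = t := by
    have hd1 : t ∣ Nat.gcd (2 * k) n := Nat.dvd_gcd (htk.mul_left 2) htn
    have hd2 : Nat.gcd (2 * k) n ∣ t * 2 := by
      have h3 : Nat.gcd (2 * k) n ∣ Nat.gcd (2 * k) (2 * n) :=
        Nat.dvd_gcd (Nat.gcd_dvd_left _ _) ((Nat.gcd_dvd_right _ _).mul_left 2)
      rw [Nat.gcd_mul_left] at h3
      have hkn' : Nat.gcd k n = t := by rw [Nat.gcd_comm]; exact ht.symm
      rw [hkn'] at h3
      simpa [mul_comm] using h3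
    obtain ⟨e, he⟩ := hd1
    have he2 : e ∣ 2 := by
      refine (Nat.mul_dvd_mul_iff_left ht0).mp ?_
      rw [← he]; exact hd2
    rcases (Nat.dvd_prime Nat.prime_two).mp he2 with rfl | rfl
    · simpa using he
    · exfalso
      have h2tn : t * 2 ∣ n := he ▸ Nat.gcd_dvd_right (2 * k) n
      obtain ⟨f, hf⟩ := h2tn
      have hdiv : n / t = 2 * f := by
        rw [hf, mul_assoc, Nat.mul_div_cancel_left _ ht0]
      rw [hdiv] at hnt
      exact (Nat.not_odd_iff_even.mpr ⟨f, two_mul f⟩) hnt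
  intro y z hyz
  simp only at hyz
  by_cases hz : z = 0
  · subst hz
    rw [zero_pow (by positivity)] at hyz
    rw [pow_eq_zero_iff (by positivity : 2 ^ k + 1 ≠ 0)] at hyz
    simp [hyz]
  · have hy : y ≠ 0 := by
      intro h
      rw [h, zero_pow (by positivity : 2 ^ k + 1 ≠ 0)] at hyz
      exact hz (pow_eq_zero_iff (by positivity : 2 ^ k + 1 ≠ 0) |>.mp hyz.symm)
    set u := y / z with hu
    have hue : u ^ (2 ^ k + 1) = 1 := by
      rw [hu, div_pow, hyz, div_self (pow_ne_zero _ hz)]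
    have hu0 : u ≠ 0 := div_ne_zero hy hz
    have hinv : u ^ 2 ^ k = u⁻¹ := by
      refine eq_inv_of_mul_eq_one_left ?_
      rw [← pow_succ]; exact hue
    have h2k : u ^ 2 ^ (2 * k) = u := by
      rw [two_mul, ← pow_pow_two, hinv, inv_pow, hinv, inv_inv]
    have hut : u ^ 2 ^ t = u := hg2 ▸ fix_gcd u (2 * k) n h2k (hq u)
    have huk : u ^ 2 ^ k = u := fix_dvd u hut htk
    have hself : u = u⁻¹ := by rw [← hinv, huk]
    have hu2 : u ^ 2 ^ 1 = 1 ^ 2 ^ 1 := by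
      rw [one_pow, pow_one, sq]
      nth_rewrite 2 [hself]
      exact mul_inv_cancel₀ hu0
    have hu1 : u = 1 := powtwo_inj (F := F) 1 hu2
    rwa [hu, div_eq_one_iff_eq hz] at hu1

private lemma card_le_three' {F : Type*} [Finite F] (p : F → Prop) (D : F → F)
    (hD : Function.Injective D) (v1 v2 v3 : F)
    (h : ∀ x, p x → D x = v1 ∨ D x = v2 ∨ D x = v3) :
    Nat.card {x // p x} ≤ 3 := by
  classical
  have key : Nat.card {x // p x} ≤ Nat.card ({v1, v2, v3} : Finset F) := by
    refine Nat.card_le_card_of_injective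
      (fun x => ⟨D x.1, by rcases h x.1 x.2 with h' | h' | h' <;> simp [h']⟩) ?_
    intro x y hxy
    exact Subtype.ext (hD (by simpa [Subtype.ext_iff] using hxy))
  refine key.trans ?_
  rw [Nat.card_eq_finsetCard]
  refine (Finset.card_insert_le _ _).trans (Nat.succ_le_succ ?_)
  refine (Finset.card_insert_le _ _).trans (Nat.succ_le_succ ?_)
  simp

theorem stmt_11 (s m n k t : ℕ) (hs : 0 < s) (hm : Odd m) (hn : n = s * m)
    (hk1 : 1 ≤ k) (hkn : k < n) (ht : t = Nat.gcd n k) (hts : t ∣ s) (hnt : Odd (n / t))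
    (α : GaloisField 2 n) (hα : α ^ 2 ^ s = α) (hα0 : α ≠ 0)
    (G : GaloisField 2 n → GaloisField 2 n)
    (hG1 : ∀ x : GaloisField 2 n, x ^ 2 ^ s = x → G x = x ^ (2 ^ k + 1) + α)
    (hG2 : ∀ x : GaloisField 2 n, ¬ x ^ 2 ^ s = x → G x = x ^ (2 ^ k + 1))
    (c : GaloisField 2 n) (hc : c ^ 2 ^ t = c) (hc1 : c ≠ 1) :
    ∀ a b : GaloisField 2 n,
      Nat.card {x : GaloisField 2 n // G (x + a) - c * G x = b} ≤ 3 := by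
  intro a b
  have hn0 : n ≠ 0 := by omega
  have hq : ∀ x : GaloisField 2 n, x ^ 2 ^ n = x := by
    intro x
    haveI : Fintype (GaloisField 2 n) := Fintype.ofFinite _
    have hcard : Fintype.card (GaloisField 2 n) = 2 ^ n := by
      rw [← Nat.card_eq_fintype_card]
      exact GaloisField.card 2 n hn0
    rw [← hcard]
    exact FiniteField.pow_card x
  have htwo : (2 : GaloisField 2 n) = 0 := by
    have h2 := CharP.cast_eq_zero (GaloisField 2 n) 2
    simpa using h2
  have hfrob : ∀ (j : ℕ) (u v : GaloisField 2 n), (u + v) ^ 2 ^ j = u ^ 2 ^ j + v ^ 2 ^ j :=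
    fun j u v => add_pow_char_pow u v 2 j
  have hck : c ^ 2 ^ k = c := fix_dvd c hc (ht ▸ Nat.gcd_dvd_right n k)
  have h1c : (1 + c) ^ 2 ^ k = 1 + c := by rw [hfrob, one_pow, hck]
  have h1c0 : (1 + c) ≠ 0 := by
    intro h
    apply hc1
    have hcn : c = -1 := eq_neg_of_add_eq_zero_right h
    rw [hcn, CharTwo.neg_eq]
  set β := a / (1 + c) with hβ
  have hab : a = (1 + c) * β := by
    rw [hβ, mul_div_cancel₀ _ h1c0]
  have haA : a ^ 2 ^ k = (1 + c) * β ^ 2 ^ k := by rw [hab, mul_pow, h1c]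
  set D : GaloisField 2 n → GaloisField 2 n := fun x => (x + a) ^ (2 ^ k + 1) + c * x ^ (2 ^ k + 1) with hD
  have hkey : ∀ x : GaloisField 2 n, D x = (1 + c) * (x + β) ^ (2 ^ k + 1)
      + ((1 + c) * (β ^ 2 ^ k * β) + ((1 + c) * β ^ 2 ^ k) * ((1 + c) * β)) := by
    intro x
    have e1 : (x + a) ^ (2 ^ k + 1) = (x ^ 2 ^ k + a ^ 2 ^ k) * (x + a) := by
      rw [pow_succ, hfrob]
    have e2 : (x + β) ^ (2 ^ k + 1) = (x ^ 2 ^ k + β ^ 2 ^ k) * (x + β) := by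
      rw [pow_succ, hfrob]
    have e3 : x ^ (2 ^ k + 1) = x ^ 2 ^ k * x := pow_succ x _
    rw [hD]
    simp only
    rw [e1, e2, e3, haA, hab]
    linear_combination (-(1 + c) * β ^ 2 ^ k * β) * htwo
  have hDinj : Function.Injective D := by
    intro x y hxy
    rw [hkey x, hkey y] at hxy
    have h1 : (x + β) ^ (2 ^ k + 1) = (y + β) ^ (2 ^ k + 1) :=
      mul_left_cancel₀ h1c0 (add_right_cancel hxy)
    have h2 : x + β = y + β := gold_inj hk1 ht hnt hq h1
    exact add_right_cancel h2
  have hsub : ∀ u v : GaloisField 2 n, u - v = u + v := CharTwo.sub_eq_add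
  have hGD : ∀ x : GaloisField 2 n, (x + a) ^ (2 ^ k + 1) + c * x ^ (2 ^ k + 1) = D x := fun _ => rfl
  by_cases ha : a ^ 2 ^ s = a
  · refine card_le_three' _ D hDinj (b + (α + c * α)) b b ?_
    intro x hx
    rw [hsub] at hx
    by_cases hxF : x ^ 2 ^ s = x
    · have hxaF : (x + a) ^ 2 ^ s = x + a := by rw [hfrob, hxF, ha]
      rw [hG1 _ hxaF, hG1 _ hxF] at hx
      left
      rw [hD]
      simp only
      linear_combination hx + (-α - c * α) * htwo
    · have hxaF : ¬ (x + a) ^ 2 ^ s = x + a := by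
        intro hmem
        apply hxF
        have hx' : x = (x + a) + a := by
          rw [add_assoc, CharTwo.add_self_eq_zero, add_zero]
        calc x ^ 2 ^ s = ((x + a) + a) ^ 2 ^ s := by rw [← hx']
          _ = (x + a) ^ 2 ^ s + a ^ 2 ^ s := hfrob s _ _
          _ = x := by rw [hmem, ha, ← hx']
      rw [hG2 _ hxaF, hG2 _ hxF] at hx
      right; left
      rw [hD]
      simp only
      linear_combination hx
  · refine card_le_three' _ D hDinj (b + c * α) (b + α) b ?_
    intro x hx
    rw [hsub] at hx
    have haxa : x ^ 2 ^ s = x → ¬ (x + a) ^ 2 ^ s = x + a := by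
      intro hxF hmem
      apply ha
      have ha' : a = x + (x + a) := by
        rw [← add_assoc, CharTwo.add_self_eq_zero, zero_add]
      calc a ^ 2 ^ s = (x + (x + a)) ^ 2 ^ s := by rw [← ha']
        _ = x ^ 2 ^ s + (x + a) ^ 2 ^ s := hfrob s _ _
        _ = a := by rw [hmem, hxF, ← ha']
    by_cases hxF : x ^ 2 ^ s = x
    · rw [hG2 _ (haxa hxF), hG1 _ hxF] at hx
      left
      rw [hD]
      simp only
      linear_combination hx + (-(c * α)) * htwo
    · by_cases hxaF : (x + a) ^ 2 ^ s = x + a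
      · rw [hG1 _ hxaF, hG2 _ hxF] at hx
        right; left
        rw [hD]
        simp only
        linear_combination hx + (-α) * htwo
      · rw [hG2 _ hxaF, hG2 _ hxF] at hx
        right; right
        rw [hD]
        simp only
        linear_combination hx
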